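/- Let (Mₙ, gₙ, xₙ) be a sequence of pointed Riemannian 3-manifolds converging in the pointed C² topology to a finite-volume hyperbolic 3-manifold H (constant curvature −1). Suppose the sequence R̂(gₙ) = R_min(gₙ)·vol(gₙ)^{2/3} satisfies lim R̂(gₙ) > −6·vol(H)^{2/3}. Then a contradiction arises; i.e., any pointed hyperbolic limit H of such a sequence satisfies vol(H) ≤ liminf vol(gₙ) and limsup R_min(gₙ) ≤ −6, hence lim R̂(gₙ) ≤ −6·vol(H)^{2/3}. -/

import Mathlib

open Filter

/-- Lemma 6.4 (lem:volume).  `Rmin n` and `vol n` are the minimum of the scalar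
curvature and the volume of `(M, gₙ)`; `volH` is the volume of a pointed hyperbolic
C²-limit `H`.  C² convergence is encoded (as in the paper's proof) by `hconv`: for every
`ξ ∈ (0,1)`, eventually `vol n ≥ (1−ξ)²·vol(H)` and `Rmin n ≤ −6(1−ξ)` (a compact core
`H̄(ξ)` of `H`, of volume `≥ (1−ξ)vol(H)` and scalar curvature `−6`, is approximated in
`Mₙ`).  Then `vol(H) ≤ liminf vol(gₙ)`, `limsup Rmin(gₙ) ≤ −6`, and any limit `ℓ` of
`R̂(gₙ) = Rmin(gₙ)·vol(gₙ)^{2/3}` satisfies `ℓ ≤ −6·vol(H)^{2/3}`; in particular the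
assumption `lim R̂(gₙ) > −6·vol(H)^{2/3}` leads to a contradiction.
(The boundedness hypotheses make `liminf`/`limsup` well-behaved; boundedness of
`vol(gₙ)` is Hypothesis (1) of Theorem 0.3.) -/
theorem stmt18 (Rmin vol : ℕ → ℝ) (volH ℓ : ℝ)
    (hvolH : 0 < volH) (hvolpos : ∀ n, 0 < vol n)
    (hvolbd : ∃ B : ℝ, ∀ n, vol n ≤ B)
    (hRbd : ∃ B : ℝ, ∀ n, B ≤ Rmin n)
    (hconv : ∀ ξ ∈ Set.Ioo (0:ℝ) 1, ∀ᶠ n in atTop,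
      (1 - ξ) ^ 2 * volH ≤ vol n ∧ Rmin n ≤ -6 * (1 - ξ))
    (hlim : Tendsto (fun n => Rmin n * vol n ^ ((2:ℝ)/3)) atTop (nhds ℓ)) :
    volH ≤ atTop.liminf vol ∧ atTop.limsup Rmin ≤ -6 ∧
      ℓ ≤ -6 * volH ^ ((2:ℝ)/3) := by
  obtain ⟨Bv, hBv⟩ := hvolbd
  obtain ⟨BR, hBR⟩ := hRbd
  have hvb : IsBoundedUnder (· ≤ ·) atTop vol := isBoundedUnder_of ⟨Bv, hBv⟩
  have hRb : IsBoundedUnder (· ≥ ·) atTop Rmin := isBoundedUnder_of ⟨BR, fun n => hBR n⟩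
  have hmem : ∀ᶠ ξ in nhdsWithin (0:ℝ) (Set.Ioi 0), ξ ∈ Set.Ioo (0:ℝ) 1 :=
    Ioo_mem_nhdsGT_of_mem (by simp)
  -- Part 1
  have h1 : volH ≤ atTop.liminf vol := by
    have hbound : ∀ ξ ∈ Set.Ioo (0:ℝ) 1, (1 - ξ) ^ 2 * volH ≤ atTop.liminf vol := by
      intro ξ hξ
      exact le_liminf_of_le hvb.isCoboundedUnder_ge
        ((hconv ξ hξ).mono fun n hn => hn.1)
    have htend : Tendsto (fun ξ : ℝ => (1 - ξ) ^ 2 * volH)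
        (nhdsWithin (0:ℝ) (Set.Ioi 0)) (nhds volH) := by
      have : Tendsto (fun ξ : ℝ => (1 - ξ) ^ 2 * volH) (nhds 0)
          (nhds ((1 - 0) ^ 2 * volH)) := by
        exact (Continuous.tendsto (by continuity) 0)
      simpa using this.mono_left nhdsWithin_le_nhds
    exact le_of_tendsto htend (hmem.mono fun ξ hξ => hbound ξ hξ)
  refine ⟨h1, ?_, ?_⟩
  -- Part 2
  · have hbound : ∀ ξ ∈ Set.Ioo (0:ℝ) 1, atTop.limsup Rmin ≤ -6 * (1 - ξ) := by
      intro ξ hξ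
      exact limsup_le_of_le hRb.isCoboundedUnder_le
        ((hconv ξ hξ).mono fun n hn => hn.2)
    have htend : Tendsto (fun ξ : ℝ => -6 * (1 - ξ))
        (nhdsWithin (0:ℝ) (Set.Ioi 0)) (nhds (-6)) := by
      have : Tendsto (fun ξ : ℝ => -6 * (1 - ξ)) (nhds 0)
          (nhds (-6 * (1 - 0))) := Continuous.tendsto (by continuity) 0
      simpa using this.mono_left nhdsWithin_le_nhds
    exact ge_of_tendsto htend (hmem.mono fun ξ hξ => hbound ξ hξ)
  -- Part 3
  · have hbound : ∀ ξ ∈ Set.Ioo (0:ℝ) 1,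
        ℓ ≤ -6 * (1 - ξ) * ((1 - ξ) ^ 2 * volH) ^ ((2:ℝ)/3) := by
      intro ξ hξ
      obtain ⟨hξ0, hξ1⟩ := hξ
      have h1ξ : (0:ℝ) < 1 - ξ := by linarith
      have hbase : (0:ℝ) < (1 - ξ) ^ 2 * volH := by positivity
      refine le_of_tendsto hlim ?_
      refine (hconv ξ ⟨hξ0, hξ1⟩).mono fun n ⟨hv, hR⟩ => ?_
      have hRneg : Rmin n ≤ 0 := hR.trans (by nlinarith)
      have hrpow : ((1 - ξ) ^ 2 * volH) ^ ((2:ℝ)/3) ≤ vol n ^ ((2:ℝ)/3) :=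
        Real.rpow_le_rpow hbase.le hv (by norm_num)
      calc Rmin n * vol n ^ ((2:ℝ)/3)
          ≤ Rmin n * ((1 - ξ) ^ 2 * volH) ^ ((2:ℝ)/3) :=
            mul_le_mul_of_nonpos_left hrpow hRneg
        _ ≤ -6 * (1 - ξ) * ((1 - ξ) ^ 2 * volH) ^ ((2:ℝ)/3) :=
            mul_le_mul_of_nonneg_right hR (Real.rpow_nonneg hbase.le _)
    have htend : Tendsto (fun ξ : ℝ => -6 * (1 - ξ) * ((1 - ξ) ^ 2 * volH) ^ ((2:ℝ)/3))
        (nhdsWithin (0:ℝ) (Set.Ioi 0)) (nhds (-6 * volH ^ ((2:ℝ)/3))) := by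
      have hc : ContinuousAt (fun ξ : ℝ => -6 * (1 - ξ) * ((1 - ξ) ^ 2 * volH) ^ ((2:ℝ)/3)) 0 := by
        apply ContinuousAt.mul
        · fun_prop
        · exact (Real.continuousAt_rpow_const _ _ (Or.inl (by simpa using hvolH.ne'))).comp
            (by fun_prop)
      have := hc.tendsto.mono_left (nhdsWithin_le_nhds (s := Set.Ioi (0:ℝ)))
      simpa using this
    exact ge_of_tendsto htend (hmem.mono fun ξ hξ => hbound ξ hξ)
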